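/- Let 𝒢 = (S,E) be a finite simple graph, K a field of characteristic 0, and 𝔫_𝒢^K the Lie algebra associated to 𝒢. For a permutation σ of S, the following are equivalent: (1) σ is a graph automorphism of 𝒢 (i.e., αβ ∈ E iff σ(α)σ(β) ∈ E); (2) there exists a Lie algebra automorphism φ of 𝔫_𝒢^K with φ(V) = V whose restriction to V is P_σ. -/

import Mathlib

section

open Sum

variable {S : Type*} [Fintype S] [DecidableEq S] [LinearOrder S] (G : SimpleGraph S)
variable {K : Type*} [Field K] [CharZero K]
variable {L : Type*} [LieRing L] [LieAlgebra K L]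

/-- The subspace `V ⊆ 𝔫_𝒢^K` spanned by the (basis vectors corresponding to) the
vertices of the graph. -/
def vertexSpan (b : Module.Basis (S ⊕ G.edgeSet) K L) : Submodule K L :=
  Submodule.span K (Set.range fun α : S => b (inl α))

/-- Let `𝒢 = (S, E)` be a finite simple graph, `K` a field of
characteristic `0`, and `𝔫_𝒢^K` the Lie algebra associated to `𝒢`: it has a basis
indexed by `S ⊕ E` (vertex vectors spanning `V` and edge vectors `α∧β` spanning `W`)
with bracket `[α, β] = α∧β` for adjacent vertices, `[α, β] = 0` for non-adjacent
vertices, and `W` central.  For a permutation `σ` of `S` the following are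
equivalent: (1) `σ` is a graph automorphism of `𝒢`; (2) there is a Lie algebra
automorphism `φ` of `𝔫_𝒢^K` with `φ(V) = V` whose restriction to `V` is `P_σ`. -/
theorem graphAut_iff_lieAut (b : Module.Basis (S ⊕ G.edgeSet) K L)
    (hbr1 : ∀ α β : S, ∀ h : G.Adj α β, α < β →
      ⁅b (inl α), b (inl β)⁆ = b (inr ⟨s(α, β), G.mem_edgeSet.mpr h⟩))
    (hbr2 : ∀ α β : S, ¬ G.Adj α β → ⁅b (inl α), b (inl β)⁆ = 0)
    (hbr3 : ∀ (e : G.edgeSet) (x : L), ⁅b (inr e), x⁆ = 0)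
    (σ : Equiv.Perm S) :
    (∀ α β : S, G.Adj α β ↔ G.Adj (σ α) (σ β)) ↔
      ∃ φ : L ≃ₗ⁅K⁆ L,
        Submodule.map (φ.toLieHom : L →ₗ[K] L) (vertexSpan G b) = vertexSpan G b ∧
        ∀ α : S, φ (b (inl α)) = b (inl (σ α)) := by
  constructor
  · intro h
    -- bracket for reversed order
    have hbr1' : ∀ α β : S, ∀ hadj : G.Adj α β, β < α →
        ⁅b (inl α), b (inl β)⁆ = -b (inr ⟨s(β, α), G.mem_edgeSet.mpr hadj.symm⟩) := by
      intro α β hadj hlt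
      rw [← lie_skew, hbr1 β α hadj.symm hlt]
    -- brackets of vertex vectors are central
    have hcent : ∀ γ δ : S, ∀ x : L, ⁅(⁅b (inl γ), b (inl δ)⁆ : L), x⁆ = 0 := by
      intro γ δ x
      by_cases hadj : G.Adj γ δ
      · rcases lt_trichotomy γ δ with hlt | heq | hlt
        · rw [hbr1 γ δ hadj hlt, hbr3]
        · exact absurd heq hadj.ne
        · rw [hbr1' γ δ hadj hlt, neg_lie, hbr3, neg_zero]
      · rw [hbr2 γ δ hadj, zero_lie]
    -- the image of an edge vector
    set g : Sym2 S → L := Sym2.lift ⟨fun γ δ => if γ ≤ δ then ⁅b (inl (σ γ)), b (inl (σ δ))⁆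
        else ⁅b (inl (σ δ)), b (inl (σ γ))⁆, by
      intro γ δ
      rcases lt_trichotomy γ δ with hlt | heq | hlt
      · simp [hlt.le, not_le.mpr hlt]
      · simp [heq]
      · simp [hlt.le, not_le.mpr hlt]⟩ with hgdef
    have hg : ∀ z : Sym2 S, ∀ x : L, ⁅g z, x⁆ = 0 := by
      intro z x
      induction z using Sym2.ind with
      | _ γ δ =>
        rw [hgdef, Sym2.lift_mk]
        show ⁅(if γ ≤ δ then ⁅b (inl (σ γ)), b (inl (σ δ))⁆
          else ⁅b (inl (σ δ)), b (inl (σ γ))⁆ : L), x⁆ = 0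
        split <;> exact hcent _ _ x
    set f : S ⊕ G.edgeSet → L := Sum.elim (fun α => b (inl (σ α))) (fun e => g e.1) with hf
    set φ₀ : L →ₗ[K] L := b.constr K f with hφ₀
    have hφ₀b : ∀ i, φ₀ (b i) = f i := fun i => b.constr_basis K f i
    -- key computation
    have hkey : ∀ γ δ : S, φ₀ ⁅b (inl γ), b (inl δ)⁆ = ⁅b (inl (σ γ)), b (inl (σ δ))⁆ := by
      intro γ δ
      by_cases hadj : G.Adj γ δ
      · rcases lt_trichotomy γ δ with hlt | heq | hlt
        · rw [hbr1 γ δ hadj hlt, hφ₀b]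
          rw [show f (inr ⟨s(γ, δ), G.mem_edgeSet.mpr hadj⟩)
              = (if γ ≤ δ then ⁅b (inl (σ γ)), b (inl (σ δ))⁆
                else ⁅b (inl (σ δ)), b (inl (σ γ))⁆ : L) from rfl, if_pos hlt.le]
        · exact absurd heq hadj.ne
        · rw [hbr1' γ δ hadj hlt, map_neg, hφ₀b]
          rw [show f (inr ⟨s(δ, γ), G.mem_edgeSet.mpr hadj.symm⟩)
              = (if δ ≤ γ then ⁅b (inl (σ δ)), b (inl (σ γ))⁆
                else ⁅b (inl (σ γ)), b (inl (σ δ))⁆ : L) from rfl, if_pos hlt.le, lie_skew]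
      · rw [hbr2 γ δ hadj, map_zero,
          hbr2 (σ γ) (σ δ) (fun hc => hadj ((h γ δ).mpr hc))]
    -- bracket preservation on basis vectors
    have h1 : ∀ i j, ⁅φ₀ (b i), φ₀ (b j)⁆ = φ₀ ⁅b i, b j⁆ := by
      rintro (α | e) (β | e')
      · rw [hφ₀b, hφ₀b, hkey α β]
        rfl
      · rw [hφ₀b (inr e'), show f (inr e') = g e'.1 from rfl,
          ← lie_skew (φ₀ (b (inl α))) (g e'.1), hg, neg_zero,
          ← lie_skew (b (inl α)) (b (inr e')), hbr3, neg_zero, map_zero]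
      · rw [hφ₀b (inr e), show f (inr e) = g e.1 from rfl, hg, hbr3, map_zero]
      · rw [hφ₀b (inr e), show f (inr e) = g e.1 from rfl, hg, hbr3, map_zero]
    -- bracket preservation in general, by bilinearity
    have key : ∀ x y : L, ⁅φ₀ x, φ₀ y⁆ = φ₀ ⁅x, y⁆ := by
      let B1 : L →ₗ[K] L →ₗ[K] L := LinearMap.mk₂ K (fun x y => ⁅φ₀ x, φ₀ y⁆)
        (by intros; simp [add_lie]) (by intros; simp [smul_lie])
        (by intros; simp [lie_add]) (by intros; simp [lie_smul])
      let B2 : L →ₗ[K] L →ₗ[K] L := LinearMap.mk₂ K (fun x y => φ₀ ⁅x, y⁆)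
        (by intros; simp [add_lie]) (by intros; simp [smul_lie])
        (by intros; simp [lie_add]) (by intros; simp [lie_smul])
      have hB : B1 = B2 := b.ext fun i => b.ext fun j => h1 i j
      intro x y
      exact LinearMap.congr_fun (LinearMap.congr_fun hB x) y
    -- surjectivity
    have hsurj : Function.Surjective φ₀ := by
      rw [← LinearMap.range_eq_top, ← top_le_iff, ← b.span_eq, Submodule.span_le]
      have hmem : ∀ γ δ : S, ∀ hadj : G.Adj γ δ, γ < δ →
          b (inr ⟨s(γ, δ), G.mem_edgeSet.mpr hadj⟩) ∈ LinearMap.range φ₀ := by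
        intro γ δ hadj hlt
        refine ⟨⁅b (inl (σ⁻¹ γ)), b (inl (σ⁻¹ δ))⁆, ?_⟩
        rw [hkey, Equiv.Perm.inv_def, Equiv.apply_symm_apply, Equiv.apply_symm_apply,
          hbr1 γ δ hadj hlt]
      rintro x ⟨i, rfl⟩
      rcases i with α | e
      · refine ⟨b (inl (σ⁻¹ α)), ?_⟩
        rw [hφ₀b]
        show b (inl (σ (σ⁻¹ α))) = _
        rw [Equiv.Perm.inv_def, Equiv.apply_symm_apply]
      · obtain ⟨z, he⟩ := e
        revert he
        induction z using Sym2.ind with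
        | _ γ δ =>
          intro he
          have hadj : G.Adj γ δ := he
          rcases lt_trichotomy γ δ with hlt | heq | hlt
          · exact hmem γ δ hadj hlt
          · exact absurd heq hadj.ne
          · have hswap : (⟨s(γ, δ), he⟩ : G.edgeSet)
                = ⟨s(δ, γ), G.mem_edgeSet.mpr hadj.symm⟩ := Subtype.ext Sym2.eq_swap
            rw [hswap]
            exact hmem δ γ hadj.symm hlt
    have hFin : Module.Finite K L := Module.Finite.of_basis b
    have hinj : Function.Injective φ₀ := LinearMap.injective_iff_surjective.mpr hsurj
    let e₀ : L ≃ₗ[K] L := LinearEquiv.ofBijective φ₀ ⟨hinj, hsurj⟩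
    let ψ : L ≃ₗ⁅K⁆ L :=
      { toLinearMap := φ₀
        map_lie' := fun {x y} => (key x y).symm
        invFun := e₀.symm
        left_inv := e₀.left_inv
        right_inv := e₀.right_inv }
    refine ⟨ψ, ?_, fun α => hφ₀b (inl α)⟩
    show Submodule.map φ₀ (vertexSpan G b) = vertexSpan G b
    unfold vertexSpan
    rw [Submodule.map_span, ← Set.range_comp]
    have hcomp : (⇑φ₀ ∘ fun α : S => b (inl α)) = fun α : S => b (inl (σ α)) :=
      funext fun α => hφ₀b (inl α)
    rw [hcomp]
    congr 1
    ext x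
    constructor
    · rintro ⟨α, rfl⟩; exact ⟨σ α, rfl⟩
    · rintro ⟨α, rfl⟩; exact ⟨σ⁻¹ α, by simp⟩
  · rintro ⟨φ, -, hφ⟩ α β
    have hne : ∀ γ δ : S, G.Adj γ δ → ⁅b (inl γ), b (inl δ)⁆ ≠ 0 := by
      intro γ δ hadj
      rcases lt_trichotomy γ δ with hlt | heq | hlt
      · rw [hbr1 γ δ hadj hlt]; exact b.ne_zero _
      · exact absurd heq hadj.ne
      · rw [← lie_skew, hbr1 δ γ hadj.symm hlt]
        simpa using b.ne_zero _
    have hadj_of : ∀ γ δ : S, ⁅b (inl γ), b (inl δ)⁆ ≠ 0 → G.Adj γ δ := by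
      intro γ δ hne' 
      by_contra hc
      exact hne' (hbr2 γ δ hc)
    have hbrφ : ∀ γ δ : S, φ ⁅b (inl γ), b (inl δ)⁆ = ⁅b (inl (σ γ)), b (inl (σ δ))⁆ := by
      intro γ δ
      rw [← hφ γ, ← hφ δ]
      exact LieHom.map_lie φ.toLieHom _ _
    constructor
    · intro hadj
      apply hadj_of
      intro hc
      apply hne α β hadj
      have h0 : φ ⁅b (inl α), b (inl β)⁆ = φ 0 := by
        rw [hbrφ, hc]
        exact (map_zero φ.toLinearEquiv).symm
      exact φ.injective h0
    · intro hadj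
      apply hadj_of
      intro hc
      apply hne (σ α) (σ β) hadj
      rw [← hbrφ, hc]
      exact map_zero φ.toLinearEquiv

end
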